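/- Let Ω ⊆ ℝ⁶ be open with coordinates (r,s,t,x,y,z), and let u : Ω → ℝ be smooth with u_s ≠ 0 on Ω and satisfying the six-dimensional equation F[u] = 0 on Ω. Let U : Ω → ℝ be smooth with ℓ_F(U) = 0 on Ω, and let Ũ : Ω → ℝ be smooth and satisfy on Ω the two relations Ũ_y − (u_y/u_s) Ũ_s = −(u_y/u_s) U_r + U_t − ((u_{st} − u_{ry})/u_s) U and Ũ_z − (u_z/u_s) Ũ_s = −(u_z/u_s) U_r + U_x + ((u_{rz} − u_{sx})/u_s) U. Then ℓ_F(Ũ) = 0 on Ω, i.e., the relations define a recursion operator mapping symmetries of F[u] = 0 to symmetries. -/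

import Mathlib

open Topology


/- Coordinates on ℝ⁶: r = 0, s = 1, t = 2, x = 3, y = 4, z = 5. -/

/-- Partial derivative of `f` in the `i`-th coordinate direction. -/
noncomputable def pd (i : Fin 6) (f : (Fin 6 → ℝ) → ℝ) (p : Fin 6 → ℝ) : ℝ :=
  fderiv ℝ f p (Pi.single i 1)

/-- The six-dimensional equation
`F[u] = u_s u_{zt} − u_z u_{st} − u_s u_{xy} + u_y u_{sx} − u_y u_{rz} + u_z u_{ry}`. -/
noncomputable def Fop (u : (Fin 6 → ℝ) → ℝ) (p : Fin 6 → ℝ) : ℝ :=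
  pd 1 u p * pd 5 (pd 2 u) p - pd 5 u p * pd 1 (pd 2 u) p
    - pd 1 u p * pd 3 (pd 4 u) p + pd 4 u p * pd 1 (pd 3 u) p
    - pd 4 u p * pd 0 (pd 5 u) p + pd 5 u p * pd 0 (pd 4 u) p

/-- The linearization `ℓ_F(W)` of `F` at `u`, applied to `W`. -/
noncomputable def ellF (u W : (Fin 6 → ℝ) → ℝ) (p : Fin 6 → ℝ) : ℝ :=
  pd 1 W p * pd 5 (pd 2 u) p + pd 1 u p * pd 5 (pd 2 W) p
    - pd 5 W p * pd 1 (pd 2 u) p - pd 5 u p * pd 1 (pd 2 W) p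
    - pd 1 W p * pd 3 (pd 4 u) p - pd 1 u p * pd 3 (pd 4 W) p
    + pd 4 W p * pd 1 (pd 3 u) p + pd 4 u p * pd 1 (pd 3 W) p
    - pd 4 W p * pd 0 (pd 5 u) p - pd 4 u p * pd 0 (pd 5 W) p
    + pd 5 W p * pd 0 (pd 4 u) p + pd 5 u p * pd 0 (pd 4 W) p

section AuxLemmas

variable {Ω : Set (Fin 6 → ℝ)} {f g : (Fin 6 → ℝ) → ℝ} {p : Fin 6 → ℝ}

lemma smooth_pd (hΩ : IsOpen Ω) (hf : ContDiffOn ℝ (⊤ : ℕ∞) f Ω) (i : Fin 6) :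
    ContDiffOn ℝ (⊤ : ℕ∞) (pd i f) Ω := by
  have h1 : ContDiffOn ℝ (⊤ : ℕ∞) (fderiv ℝ f) Ω :=
    hf.fderiv_of_isOpen hΩ (by exact_mod_cast le_top)
  exact h1.clm_apply contDiffOn_const

lemma diffAt' {F : Type*} [NormedAddCommGroup F] [NormedSpace ℝ F] {f : (Fin 6 → ℝ) → F}
    (hΩ : IsOpen Ω) (hf : ContDiffOn ℝ (⊤ : ℕ∞) f Ω) (hp : p ∈ Ω) :
    DifferentiableAt ℝ f p :=
  (hf.contDiffAt (hΩ.mem_nhds hp)).differentiableAt (by simp)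

lemma pd_congr_on (hΩ : IsOpen Ω) (hp : p ∈ Ω) (h : ∀ q ∈ Ω, f q = g q) (i : Fin 6) :
    pd i f p = pd i g p := by
  unfold pd
  have hev : f =ᶠ[𝓝 p] g := by
    filter_upwards [hΩ.mem_nhds hp] with q hq using h q hq
  rw [hev.fderiv_eq]

lemma pd_zero_on (hΩ : IsOpen Ω) (hp : p ∈ Ω) (h : ∀ q ∈ Ω, f q = 0) (i : Fin 6) :
    pd i f p = 0 := by
  rw [pd_congr_on (g := fun _ => (0:ℝ)) hΩ hp h i]
  unfold pd
  simp [fderiv_const]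

lemma pd_comm (hΩ : IsOpen Ω) (hf : ContDiffOn ℝ (⊤ : ℕ∞) f Ω) (hp : p ∈ Ω) (i j : Fin 6) :
    pd i (pd j f) p = pd j (pd i f) p := by
  have hf' : ContDiffOn ℝ (⊤ : ℕ∞) (fderiv ℝ f) Ω :=
    hf.fderiv_of_isOpen hΩ (by exact_mod_cast le_top)
  have hdd : DifferentiableAt ℝ (fderiv ℝ f) p := diffAt' hΩ hf' hp
  have hev : ∀ᶠ y in 𝓝 p, HasFDerivAt f (fderiv ℝ f y) y := by
    filter_upwards [hΩ.mem_nhds hp] with q hq using (diffAt' hΩ hf hq).hasFDerivAt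
  have hsym := second_derivative_symmetric_of_eventually hev hdd.hasFDerivAt
    (Pi.single i 1) (Pi.single j 1)
  have key : ∀ k l : Fin 6, pd k (pd l f) p
      = fderiv ℝ (fderiv ℝ f) p (Pi.single k 1) (Pi.single l 1) := by
    intro k l
    have h1 : HasFDerivAt (fun q => fderiv ℝ f q (Pi.single l 1))
        ((fderiv ℝ (fderiv ℝ f) p).flip (Pi.single l 1)) p := by
      have h2 := hdd.hasFDerivAt.clm_apply (hasFDerivAt_const (Pi.single l 1 : Fin 6 → ℝ) p)
      simpa using h2
    show fderiv ℝ (fun q => fderiv ℝ f q (Pi.single l 1)) p (Pi.single k 1) = _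
    rw [h1.fderiv]
    simp
  rw [key i j, key j i]
  exact hsym

lemma pd_mul (hf : DifferentiableAt ℝ f p) (hg : DifferentiableAt ℝ g p) (i : Fin 6) :
    pd i (fun q => f q * g q) p = pd i f p * g p + f p * pd i g p := by
  unfold pd
  rw [fderiv_fun_mul hf hg]
  simp [smul_eq_mul]
  ring

lemma pd_add (hf : DifferentiableAt ℝ f p) (hg : DifferentiableAt ℝ g p) (i : Fin 6) :
    pd i (fun q => f q + g q) p = pd i f p + pd i g p := by
  unfold pd
  rw [fderiv_fun_add hf hg]
  simp

lemma pd_sub (hf : DifferentiableAt ℝ f p) (hg : DifferentiableAt ℝ g p) (i : Fin 6) :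
    pd i (fun q => f q - g q) p = pd i f p - pd i g p := by
  unfold pd
  rw [fderiv_fun_sub hf hg]
  simp

lemma pd_shapeG (i : Fin 6) (f1 f2 f3 f4 f5 f6 f7 f8 f9 f10 f11 : (Fin 6 → ℝ) → ℝ)
    (h1 : DifferentiableAt ℝ f1 p) (h2 : DifferentiableAt ℝ f2 p)
    (h3 : DifferentiableAt ℝ f3 p) (h4 : DifferentiableAt ℝ f4 p)
    (h5 : DifferentiableAt ℝ f5 p) (h6 : DifferentiableAt ℝ f6 p)
    (h7 : DifferentiableAt ℝ f7 p) (h8 : DifferentiableAt ℝ f8 p)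
    (h9 : DifferentiableAt ℝ f9 p) (h10 : DifferentiableAt ℝ f10 p)
    (h11 : DifferentiableAt ℝ f11 p) :
    pd i (fun q => f1 q * f2 q - f3 q * f4 q + f5 q * f6 q - f7 q * f8 q
        + (f9 q - f10 q) * f11 q) p
      = (pd i f1 p * f2 p + f1 p * pd i f2 p) - (pd i f3 p * f4 p + f3 p * pd i f4 p)
        + (pd i f5 p * f6 p + f5 p * pd i f6 p) - (pd i f7 p * f8 p + f7 p * pd i f8 p)
        + ((pd i f9 p - pd i f10 p) * f11 p + (f9 p - f10 p) * pd i f11 p) := by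
  rw [pd_add ((((h1.fun_mul h2).fun_sub (h3.fun_mul h4)).fun_add (h5.fun_mul h6)).fun_sub (h7.fun_mul h8)) ((h9.fun_sub h10).fun_mul h11),
    pd_sub (((h1.fun_mul h2).fun_sub (h3.fun_mul h4)).fun_add (h5.fun_mul h6)) (h7.fun_mul h8),
    pd_add ((h1.fun_mul h2).fun_sub (h3.fun_mul h4)) (h5.fun_mul h6),
    pd_sub (h1.fun_mul h2) (h3.fun_mul h4),
    pd_mul h1 h2, pd_mul h3 h4, pd_mul h5 h6, pd_mul h7 h8,
    pd_mul (h9.fun_sub h10) h11, pd_sub h9 h10]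

lemma pd_shapeF (i : Fin 6) (f1 f2 f3 f4 f5 f6 f7 f8 f9 f10 f11 f12 : (Fin 6 → ℝ) → ℝ)
    (h1 : DifferentiableAt ℝ f1 p) (h2 : DifferentiableAt ℝ f2 p)
    (h3 : DifferentiableAt ℝ f3 p) (h4 : DifferentiableAt ℝ f4 p)
    (h5 : DifferentiableAt ℝ f5 p) (h6 : DifferentiableAt ℝ f6 p)
    (h7 : DifferentiableAt ℝ f7 p) (h8 : DifferentiableAt ℝ f8 p)
    (h9 : DifferentiableAt ℝ f9 p) (h10 : DifferentiableAt ℝ f10 p)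
    (h11 : DifferentiableAt ℝ f11 p) (h12 : DifferentiableAt ℝ f12 p) :
    pd i (fun q => f1 q * f2 q - f3 q * f4 q - f5 q * f6 q + f7 q * f8 q
        - f9 q * f10 q + f11 q * f12 q) p
      = (pd i f1 p * f2 p + f1 p * pd i f2 p) - (pd i f3 p * f4 p + f3 p * pd i f4 p)
        - (pd i f5 p * f6 p + f5 p * pd i f6 p) + (pd i f7 p * f8 p + f7 p * pd i f8 p)
        - (pd i f9 p * f10 p + f9 p * pd i f10 p) + (pd i f11 p * f12 p + f11 p * pd i f12 p) := by
  rw [pd_add ((((((h1.fun_mul h2).fun_sub (h3.fun_mul h4)).fun_sub (h5.fun_mul h6)).fun_add (h7.fun_mul h8)).fun_sub (h9.fun_mul h10))) (h11.fun_mul h12),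
    pd_sub ((((h1.fun_mul h2).fun_sub (h3.fun_mul h4)).fun_sub (h5.fun_mul h6)).fun_add (h7.fun_mul h8)) (h9.fun_mul h10),
    pd_add (((h1.fun_mul h2).fun_sub (h3.fun_mul h4)).fun_sub (h5.fun_mul h6)) (h7.fun_mul h8),
    pd_sub ((h1.fun_mul h2).fun_sub (h3.fun_mul h4)) (h5.fun_mul h6),
    pd_sub (h1.fun_mul h2) (h3.fun_mul h4),
    pd_mul h1 h2, pd_mul h3 h4, pd_mul h5 h6, pd_mul h7 h8, pd_mul h9 h10, pd_mul h11 h12]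


end AuxLemmas

theorem recursion_operator_six_dim
    (Ω : Set (Fin 6 → ℝ)) (hΩ : IsOpen Ω)
    (u U Ut : (Fin 6 → ℝ) → ℝ)
    (hu : ContDiffOn ℝ (⊤ : ℕ∞) u Ω)
    (hU : ContDiffOn ℝ (⊤ : ℕ∞) U Ω)
    (hUt : ContDiffOn ℝ (⊤ : ℕ∞) Ut Ω)
    (hus : ∀ p ∈ Ω, pd 1 u p ≠ 0)
    (hF : ∀ p ∈ Ω, Fop u p = 0)
    (hsym : ∀ p ∈ Ω, ellF u U p = 0)
    -- Ũ_y − (u_y/u_s) Ũ_s = −(u_y/u_s) U_r + U_t − ((u_{st} − u_{ry})/u_s) U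
    (hrel1 : ∀ p ∈ Ω,
      pd 4 Ut p - (pd 4 u p / pd 1 u p) * pd 1 Ut p =
        -(pd 4 u p / pd 1 u p) * pd 0 U p + pd 2 U p
          - ((pd 1 (pd 2 u) p - pd 0 (pd 4 u) p) / pd 1 u p) * U p)
    -- Ũ_z − (u_z/u_s) Ũ_s = −(u_z/u_s) U_r + U_x + ((u_{rz} − u_{sx})/u_s) U
    (hrel2 : ∀ p ∈ Ω,
      pd 5 Ut p - (pd 5 u p / pd 1 u p) * pd 1 Ut p =
        -(pd 5 u p / pd 1 u p) * pd 0 U p + pd 3 U p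
          + ((pd 0 (pd 5 u) p - pd 1 (pd 3 u) p) / pd 1 u p) * U p) :
    ∀ p ∈ Ω, ellF u Ut p = 0 := by
  intro p hp
  have hu1 : ∀ i : Fin 6, ContDiffOn ℝ (⊤ : ℕ∞) (pd i u) Ω := fun i => smooth_pd hΩ hu i
  have hu2 : ∀ i j : Fin 6, ContDiffOn ℝ (⊤ : ℕ∞) (pd i (pd j u)) Ω :=
    fun i j => smooth_pd hΩ (hu1 j) i
  have hU1 : ∀ i : Fin 6, ContDiffOn ℝ (⊤ : ℕ∞) (pd i U) Ω := fun i => smooth_pd hΩ hU i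
  have hUt1 : ∀ i : Fin 6, ContDiffOn ℝ (⊤ : ℕ∞) (pd i Ut) Ω := fun i => smooth_pd hΩ hUt i
  have D : ∀ {f : (Fin 6 → ℝ) → ℝ}, ContDiffOn ℝ (⊤ : ℕ∞) f Ω → DifferentiableAt ℝ f p :=
    fun hf => diffAt' hΩ hf hp
  -- relations with cleared denominators
  have hG1 : ∀ q ∈ Ω, pd 1 u q * pd 4 Ut q - pd 4 u q * pd 1 Ut q + pd 4 u q * pd 0 U q
      - pd 1 u q * pd 2 U q + (pd 1 (pd 2 u) q - pd 0 (pd 4 u) q) * U q = 0 := by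
    intro q hq
    have h := hrel1 q hq
    have hne := hus q hq
    field_simp at h
    linear_combination h
  have hG2 : ∀ q ∈ Ω, pd 1 u q * pd 5 Ut q - pd 5 u q * pd 1 Ut q + pd 5 u q * pd 0 U q
      - pd 1 u q * pd 3 U q + (pd 1 (pd 3 u) q - pd 0 (pd 5 u) q) * U q = 0 := by
    intro q hq
    have h := hrel2 q hq
    have hne := hus q hq
    field_simp at h
    linear_combination h
  have hG1p := hG1 p hp
  have hG2p := hG2 p hp
  -- canonical form of F = 0 on Ω
  have hFcan : ∀ q ∈ Ω, pd 1 u q * pd 2 (pd 5 u) q - pd 5 u q * pd 1 (pd 2 u) q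
      - pd 1 u q * pd 3 (pd 4 u) q + pd 4 u q * pd 1 (pd 3 u) q
      - pd 4 u q * pd 0 (pd 5 u) q + pd 5 u q * pd 0 (pd 4 u) q = 0 := by
    intro q hq
    have h := hF q hq
    unfold Fop at h
    rw [pd_comm hΩ hu hq 5 2] at h
    exact h
  have hFp := hFcan p hp
  -- r-derivative of F
  have hDrF := pd_zero_on (f := fun q => pd 1 u q * pd 2 (pd 5 u) q - pd 5 u q * pd 1 (pd 2 u) q
      - pd 1 u q * pd 3 (pd 4 u) q + pd 4 u q * pd 1 (pd 3 u) q
      - pd 4 u q * pd 0 (pd 5 u) q + pd 5 u q * pd 0 (pd 4 u) q) hΩ hp hFcan 0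
  rw [pd_shapeF 0 (pd 1 u) (pd 2 (pd 5 u)) (pd 5 u) (pd 1 (pd 2 u)) (pd 1 u) (pd 3 (pd 4 u))
    (pd 4 u) (pd 1 (pd 3 u)) (pd 4 u) (pd 0 (pd 5 u)) (pd 5 u) (pd 0 (pd 4 u))
    (D (hu1 1)) (D (hu2 2 5)) (D (hu1 5)) (D (hu2 1 2)) (D (hu1 1)) (D (hu2 3 4))
    (D (hu1 4)) (D (hu2 1 3)) (D (hu1 4)) (D (hu2 0 5)) (D (hu1 5)) (D (hu2 0 4))] at hDrF
  -- derivatives of the relations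
  have hDrG1 := pd_zero_on (f := fun q => pd 1 u q * pd 4 Ut q - pd 4 u q * pd 1 Ut q
      + pd 4 u q * pd 0 U q - pd 1 u q * pd 2 U q
      + (pd 1 (pd 2 u) q - pd 0 (pd 4 u) q) * U q) hΩ hp hG1 0
  rw [pd_shapeG 0 (pd 1 u) (pd 4 Ut) (pd 4 u) (pd 1 Ut) (pd 4 u) (pd 0 U) (pd 1 u) (pd 2 U)
    (pd 1 (pd 2 u)) (pd 0 (pd 4 u)) U
    (D (hu1 1)) (D (hUt1 4)) (D (hu1 4)) (D (hUt1 1)) (D (hu1 4)) (D (hU1 0)) (D (hu1 1))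
    (D (hU1 2)) (D (hu2 1 2)) (D (hu2 0 4)) (D hU)] at hDrG1
  have hDxG1 := pd_zero_on (f := fun q => pd 1 u q * pd 4 Ut q - pd 4 u q * pd 1 Ut q
      + pd 4 u q * pd 0 U q - pd 1 u q * pd 2 U q
      + (pd 1 (pd 2 u) q - pd 0 (pd 4 u) q) * U q) hΩ hp hG1 3
  rw [pd_shapeG 3 (pd 1 u) (pd 4 Ut) (pd 4 u) (pd 1 Ut) (pd 4 u) (pd 0 U) (pd 1 u) (pd 2 U)
    (pd 1 (pd 2 u)) (pd 0 (pd 4 u)) U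
    (D (hu1 1)) (D (hUt1 4)) (D (hu1 4)) (D (hUt1 1)) (D (hu1 4)) (D (hU1 0)) (D (hu1 1))
    (D (hU1 2)) (D (hu2 1 2)) (D (hu2 0 4)) (D hU)] at hDxG1
  have s7 : pd 3 (pd 1 (pd 2 u)) p = pd 1 (pd 2 (pd 3 u)) p := by
    rw [pd_comm hΩ (hu1 2) hp 3 1]
    exact pd_congr_on hΩ hp (fun q hq => pd_comm hΩ hu hq 3 2) 1
  rw [pd_comm hΩ hu hp 3 1, pd_comm hΩ hUt hp 3 1, pd_comm hΩ hU hp 3 0,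
    pd_comm hΩ hU hp 3 2, s7, pd_comm hΩ (hu1 4) hp 3 0] at hDxG1
  have hDrG2 := pd_zero_on (f := fun q => pd 1 u q * pd 5 Ut q - pd 5 u q * pd 1 Ut q
      + pd 5 u q * pd 0 U q - pd 1 u q * pd 3 U q
      + (pd 1 (pd 3 u) q - pd 0 (pd 5 u) q) * U q) hΩ hp hG2 0
  rw [pd_shapeG 0 (pd 1 u) (pd 5 Ut) (pd 5 u) (pd 1 Ut) (pd 5 u) (pd 0 U) (pd 1 u) (pd 3 U)
    (pd 1 (pd 3 u)) (pd 0 (pd 5 u)) U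
    (D (hu1 1)) (D (hUt1 5)) (D (hu1 5)) (D (hUt1 1)) (D (hu1 5)) (D (hU1 0)) (D (hu1 1))
    (D (hU1 3)) (D (hu2 1 3)) (D (hu2 0 5)) (D hU)] at hDrG2
  have hDtG2 := pd_zero_on (f := fun q => pd 1 u q * pd 5 Ut q - pd 5 u q * pd 1 Ut q
      + pd 5 u q * pd 0 U q - pd 1 u q * pd 3 U q
      + (pd 1 (pd 3 u) q - pd 0 (pd 5 u) q) * U q) hΩ hp hG2 2
  rw [pd_shapeG 2 (pd 1 u) (pd 5 Ut) (pd 5 u) (pd 1 Ut) (pd 5 u) (pd 0 U) (pd 1 u) (pd 3 U)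
    (pd 1 (pd 3 u)) (pd 0 (pd 5 u)) U
    (D (hu1 1)) (D (hUt1 5)) (D (hu1 5)) (D (hUt1 1)) (D (hu1 5)) (D (hU1 0)) (D (hu1 1))
    (D (hU1 3)) (D (hu2 1 3)) (D (hu2 0 5)) (D hU)] at hDtG2
  rw [pd_comm hΩ hu hp 2 1, pd_comm hΩ hUt hp 2 1, pd_comm hΩ hU hp 2 0,
    pd_comm hΩ (hu1 3) hp 2 1, pd_comm hΩ (hu1 5) hp 2 0] at hDtG2
  -- conclude
  have h3 : (pd 1 u p) ^ 3 ≠ 0 := pow_ne_zero _ (hus p hp)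
  unfold ellF
  rw [pd_comm hΩ hu hp 5 2, pd_comm hΩ hUt hp 5 2]
  apply mul_left_cancel₀ h3
  rw [mul_zero]
  linear_combination (pd 1 u p ^ 3) * hDtG2 - (pd 1 u p ^ 3) * hDxG1
    + (pd 1 u p ^ 2 * pd 5 u p) * hDrG1 - (pd 1 u p ^ 2 * pd 4 u p) * hDrG2
    + (pd 1 u p ^ 2 * pd 1 (pd 3 u) p - pd 1 u p * pd 0 (pd 1 u) p * pd 5 u p
        - pd 1 u p ^ 2 * (pd 0 (pd 5 u) p - pd 1 (pd 3 u) p)) * hG1p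
    + (-(pd 1 u p ^ 2 * pd 1 (pd 2 u) p) + pd 1 u p * pd 0 (pd 1 u) p * pd 4 u p
        - pd 1 u p ^ 2 * (pd 1 (pd 2 u) p - pd 0 (pd 4 u) p)) * hG2p
    + (2 * pd 1 u p ^ 2 * pd 1 Ut p - pd 1 u p ^ 2 * pd 0 U p
        - pd 1 u p * pd 0 (pd 1 u) p * U p) * hFp
    + (pd 1 u p ^ 2 * U p) * hDrF
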